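/- Let G be a finite simple graph with m edges and arboricity at most α (the edge set of G partitions into at most α forests), where α ≥ 1 is an integer. Then Σ_{v ∈ V} e(G[N(v)]) ≤ 2·α·m, where e(G[N(v)]) is the number of edges of the subgraph of G induced on the neighborhood N(v) of v. -/

import Mathlib

open Classical Finset

namespace ForestAux

variable {V : Type*}

/-- In an acyclic graph, adjacent vertices have different distances to a common
reachable vertex `r`. -/
lemma dist_ne {H : SimpleGraph V} (hH : H.IsAcyclic) {u v r : V}
    (huv : H.Adj u v) (hu : H.Reachable u r) (hv : H.Reachable v r) :
    H.dist u r ≠ H.dist v r := by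
  intro h
  obtain ⟨pv, hpv, hpvl⟩ := hv.exists_path_of_dist
  by_cases hu' : u ∈ pv.support
  · -- then dist u r ≤ drop length ≤ dist v r - take length, take length ≥ 1
    have h1 : H.dist u r ≤ (pv.dropUntil u hu').length := SimpleGraph.dist_le _
    have h2 : (pv.takeUntil u hu').length + (pv.dropUntil u hu').length = pv.length := by
      have := congrArg SimpleGraph.Walk.length (pv.take_spec hu')
      rwa [SimpleGraph.Walk.length_append] at this
    have h3 : (pv.takeUntil u hu').length ≠ 0 := by
      intro h0
      exact huv.ne (SimpleGraph.Walk.eq_of_length_eq_zero h0).symm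
    omega
  · obtain ⟨pu, hpu, hpul⟩ := hu.exists_path_of_dist
    have hp' : (SimpleGraph.Walk.cons huv pv).IsPath := hpv.cons hu'
    have := hH.path_unique ⟨_, hp'⟩ ⟨pu, hpu⟩
    have hl := congrArg (fun p : H.Path u r => p.1.length) this
    simp only [SimpleGraph.Walk.length_cons] at hl
    omega

/-- In an acyclic graph, a vertex has at most one neighbor strictly closer to `r`. -/
lemma parent_unique {H : SimpleGraph V} (hH : H.IsAcyclic) {u v w r : V}
    (huv : H.Adj u v) (huw : H.Adj u w)
    (hv : H.Reachable v r) (hw : H.Reachable w r)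
    (hdv : H.dist v r < H.dist u r) (hdw : H.dist w r < H.dist u r) : v = w := by
  obtain ⟨pv, hpv, hpvl⟩ := hv.exists_path_of_dist
  obtain ⟨pw, hpw, hpwl⟩ := hw.exists_path_of_dist
  have huv' : u ∉ pv.support := by
    intro hu'
    have h1 : H.dist u r ≤ (pv.dropUntil u hu').length := SimpleGraph.dist_le _
    have h2 := SimpleGraph.Walk.length_dropUntil_le pv hu'
    omega
  have huw' : u ∉ pw.support := by
    intro hu'
    have h1 : H.dist u r ≤ (pw.dropUntil u hu').length := SimpleGraph.dist_le _
    have h2 := SimpleGraph.Walk.length_dropUntil_le pw hu'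
    omega
  have hp1 : (SimpleGraph.Walk.cons huv pv).IsPath := hpv.cons huv'
  have hp2 : (SimpleGraph.Walk.cons huw pw).IsPath := hpw.cons huw'
  have heq := hH.path_unique ⟨_, hp1⟩ ⟨_, hp2⟩
  have := congrArg (fun p : H.Path u r => p.1.getVert 1) heq
  simpa [SimpleGraph.Walk.getVert_cons_succ, SimpleGraph.Walk.getVert_zero] using this

/-- Pick an endpoint of `e` which is (for edges) the endpoint farther from the root
of its connected component. -/
noncomputable def pick (H : SimpleGraph V) (e : Sym2 V) : V :=
  if H.dist (Quot.out e).2 ((H.connectedComponentMk (Quot.out e).1).out) <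
      H.dist (Quot.out e).1 ((H.connectedComponentMk (Quot.out e).1).out) then
    (Quot.out e).1
  else (Quot.out e).2

lemma pick_mem (H : SimpleGraph V) (e : Sym2 V) : pick H e ∈ e := by
  unfold pick
  split_ifs
  · exact Sym2.out_fst_mem e
  · exact Sym2.out_snd_mem e

lemma pick_spec {H : SimpleGraph V} (hH : H.IsAcyclic) {e : Sym2 V} (he : e ∈ H.edgeSet) :
    ∃ o, e = s(pick H e, o) ∧ H.Adj (pick H e) o ∧
      H.Reachable o ((H.connectedComponentMk (pick H e)).out) ∧
      H.dist o ((H.connectedComponentMk (pick H e)).out) <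
        H.dist (pick H e) ((H.connectedComponentMk (pick H e)).out) := by
  set x := (Quot.out e).1 with hx
  set y := (Quot.out e).2 with hy
  have hout : e = s(x, y) := by rw [hx, hy]; exact (Quot.out_eq e).symm
  have hxy : H.Adj x y := by rwa [hout, SimpleGraph.mem_edgeSet] at he
  have hcomp : H.connectedComponentMk x = H.connectedComponentMk y :=
    SimpleGraph.ConnectedComponent.connectedComponentMk_eq_of_adj hxy
  set r := (H.connectedComponentMk x).out with hr
  have hrx : H.Reachable x r := SimpleGraph.ConnectedComponent.eq.mp (Quot.out_eq _).symm
  have hry : H.Reachable y r := hxy.symm.reachable.trans hrx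
  have hne : H.dist x r ≠ H.dist y r := dist_ne hH hxy hrx hry
  by_cases hlt : H.dist y r < H.dist x r
  · have hpick : pick H e = x := by rw [pick, if_pos]; exact hlt
    refine ⟨y, ?_, ?_, ?_, ?_⟩ <;> rw [hpick]
    · exact hout
    · exact hxy
    · exact hry
    · exact hlt
  · have hlt' : H.dist x r < H.dist y r := by omega
    have hpick : pick H e = y := by rw [pick, if_neg]; exact hlt
    have hr' : (H.connectedComponentMk y).out = r := by rw [← hcomp]
    refine ⟨x, ?_, ?_, ?_, ?_⟩ <;> rw [hpick]
    · rw [hout, Sym2.eq_swap]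
    · exact hxy.symm
    · rw [hr']; exact hrx
    · rw [hr']; exact hlt'

lemma pick_injOn {H : SimpleGraph V} (hH : H.IsAcyclic) :
    Set.InjOn (pick H) H.edgeSet := by
  intro e1 h1 e2 h2 hp
  obtain ⟨v, he1, h1a, h1r, h1d⟩ := pick_spec hH h1
  obtain ⟨w, he2, h2a, h2r, h2d⟩ := pick_spec hH h2
  rw [hp] at he1 h1a h1r h1d
  have hvw : v = w := parent_unique hH h1a h2a h1r h2r h1d h2d
  rw [hvw] at he1
  rw [he1]
  exact he2.symm

/-- Key counting lemma: in an acyclic graph, a set of edges all of whose endpoints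
lie in a finite set `S` has cardinality at most that of `S`. -/
lemma card_le_of_forest {H : SimpleGraph V} (hH : H.IsAcyclic) (E : Finset (Sym2 V))
    (S : Finset V) (hE : ∀ e ∈ E, e ∈ H.edgeSet) (hS : ∀ e ∈ E, ∀ u ∈ e, u ∈ S) :
    E.card ≤ S.card := by
  apply Finset.card_le_card_of_injOn (pick H)
  · intro e he
    exact hS e he _ (pick_mem H e)
  · intro e1 h1 e2 h2 h
    exact pick_injOn hH (hE e1 (Finset.mem_coe.mp h1)) (hE e2 (Finset.mem_coe.mp h2)) h

end ForestAux

/-- A graph `G` has arboricity at most `a` if its edge set can be partitioned into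
at most `a` forests, i.e. there are `a` acyclic subgraphs of `G` with pairwise disjoint
edge sets whose union covers every edge of `G`. -/
def HasArboricityLE {V : Type*} (G : SimpleGraph V) (a : ℕ) : Prop :=
  ∃ F : Fin a → SimpleGraph V,
    (∀ i, (F i).IsAcyclic) ∧ (∀ i, F i ≤ G) ∧
    (Pairwise fun i j => Disjoint (F i).edgeSet (F j).edgeSet) ∧
    ∀ e ∈ G.edgeSet, ∃ i, e ∈ (F i).edgeSet

/-- If `G` has `m` edges and arboricity at most `a ≥ 1`, then the total number of edges of the
subgraphs induced on the vertex neighborhoods satisfies `Σ_{v ∈ V} e(G[N(v)]) ≤ 2·a·m`. -/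
theorem sum_neighborhood_edges_le {V : Type*} [Fintype V] [DecidableEq V]
    (G : SimpleGraph V) [DecidableRel G.Adj] (a : ℕ) (ha : 1 ≤ a)
    (hG : HasArboricityLE G a) :
    ∑ v : V, (G.edgeFinset.filter fun e => ∀ u ∈ e, u ∈ G.neighborFinset v).card
      ≤ 2 * a * G.edgeFinset.card := by
  classical
  obtain ⟨F, hac, hle, _hdisj, hcover⟩ := hG
  have key : ∀ v : V,
      (G.edgeFinset.filter fun e => ∀ u ∈ e, u ∈ G.neighborFinset v).card ≤ a * G.degree v := by
    intro v
    have hsub : (G.edgeFinset.filter fun e => ∀ u ∈ e, u ∈ G.neighborFinset v) ⊆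
        Finset.univ.biUnion (fun i : Fin a =>
          (G.edgeFinset.filter fun e => ∀ u ∈ e, u ∈ G.neighborFinset v).filter
            (fun e => e ∈ (F i).edgeSet)) := by
      intro e he
      have he' := he
      rw [Finset.mem_filter] at he'
      obtain ⟨i, hi⟩ := hcover e (SimpleGraph.mem_edgeFinset.mp he'.1)
      exact Finset.mem_biUnion.mpr ⟨i, Finset.mem_univ i, Finset.mem_filter.mpr ⟨he, hi⟩⟩
    calc (G.edgeFinset.filter fun e => ∀ u ∈ e, u ∈ G.neighborFinset v).card
        ≤ (Finset.univ.biUnion (fun i : Fin a =>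
            (G.edgeFinset.filter fun e => ∀ u ∈ e, u ∈ G.neighborFinset v).filter
              (fun e => e ∈ (F i).edgeSet))).card :=
          Finset.card_le_card hsub
      _ ≤ ∑ i : Fin a,
            ((G.edgeFinset.filter fun e => ∀ u ∈ e, u ∈ G.neighborFinset v).filter
              (fun e => e ∈ (F i).edgeSet)).card :=
          Finset.card_biUnion_le
      _ ≤ ∑ _i : Fin a, (G.neighborFinset v).card := by
          refine Finset.sum_le_sum fun i _ => ?_
          refine ForestAux.card_le_of_forest (hac i) _ _ ?_ ?_
          · intro e he
            exact (Finset.mem_filter.mp he).2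
          · intro e he u hu
            exact (Finset.mem_filter.mp (Finset.mem_filter.mp he).1).2 u hu
      _ = a * G.degree v := by
          simp [Finset.sum_const, SimpleGraph.card_neighborFinset_eq_degree, mul_comm]
  calc ∑ v : V, (G.edgeFinset.filter fun e => ∀ u ∈ e, u ∈ G.neighborFinset v).card
      ≤ ∑ v : V, a * G.degree v := Finset.sum_le_sum fun v _ => key v
    _ = a * ∑ v : V, G.degree v := by rw [Finset.mul_sum]
    _ = a * (2 * G.edgeFinset.card) := by rw [G.sum_degrees_eq_twice_card_edges]
    _ = 2 * a * G.edgeFinset.card := by ring
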